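/- Let G = ⟨a, b | a²b⁻²ab⁻²a²ba²baba²b = 1⟩ with a left-ordering ≺, and set μ = b⁻²ab⁻²ab⁻¹, λ = a⁻²b⁻¹a⁻²b. If 1 ≺ a and 1 ≺ b, then 1 ≺ μ⁻¹λ. -/

import Mathlib

/-- The single relator `a²b⁻²ab⁻²a²ba²baba²b` of the presentation of `π₁(v2503)`,
with `a`, `b` the generators of the free group on two letters. -/
def rel2503 : FreeGroup (Fin 2) :=
  let a : FreeGroup (Fin 2) := FreeGroup.of 0
  let b : FreeGroup (Fin 2) := FreeGroup.of 1
  a ^ 2 * b⁻¹ ^ 2 * a * b⁻¹ ^ 2 * a ^ 2 * b * a ^ 2 * b * a * b * a ^ 2 * b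

/-- The fundamental group of `v2503`: `⟨a, b | a²b⁻²ab⁻²a²ba²baba²b = 1⟩`. -/
abbrev G2503 : Type := PresentedGroup ({rel2503} : Set (FreeGroup (Fin 2)))

/-- The generator `a`. -/
def ga : G2503 := PresentedGroup.of 0
/-- The generator `b`. -/
def gb : G2503 := PresentedGroup.of 1

/-- `x = b⁻²a`. -/
def gx : G2503 := gb⁻¹ ^ 2 * ga
/-- `y = ba²`. -/
def gy : G2503 := gb * ga ^ 2
/-- The homological meridian `μ = b⁻²ab⁻²ab⁻¹`. -/
def gmu : G2503 := gb⁻¹ ^ 2 * ga * gb⁻¹ ^ 2 * ga * gb⁻¹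
/-- The homological longitude `λ = a⁻²b⁻¹a⁻²b`. -/
def glam : G2503 := ga⁻¹ ^ 2 * gb⁻¹ * ga⁻¹ ^ 2 * gb

/-- The image of the relator is trivial in `G2503`. -/
lemma rel_eq_one :
    ga ^ 2 * gb⁻¹ ^ 2 * ga * gb⁻¹ ^ 2 * ga ^ 2 * gb * ga ^ 2 * gb * ga * gb * ga ^ 2 * gb
      = 1 := by
  have h : (QuotientGroup.mk' (Subgroup.normalClosure
      ({rel2503} : Set (FreeGroup (Fin 2))))) rel2503 = 1 :=
    (QuotientGroup.eq_one_iff _).2 (Subgroup.subset_normalClosure rfl)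
  simp only [rel2503, map_mul, map_pow, map_inv] at h
  exact h

/-- Given a left-ordering of `π₁(v2503)`, if `1 ≺ a` and `1 ≺ b` then `1 ≺ μ⁻¹λ`. -/
theorem case_III_positive [LinearOrder G2503] [CovariantClass G2503 G2503 (· * ·) (· < ·)]
    (ha : 1 < ga) (hb : 1 < gb) : 1 < gmu⁻¹ * glam := by
  haveI hcle : CovariantClass G2503 G2503 (· * ·) (· ≤ ·) :=
    ⟨fun c u v h => by
      rcases h.lt_or_eq with h' | h'
      · exact le_of_lt (mul_lt_mul_right h' c)
      · exact le_of_eq (by rw [h'])⟩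
  -- basic positivity facts
  have hlt : ∀ u v : G2503, 1 < u → 1 ≤ v → 1 < u * v := fun u v hu hv =>
    lt_of_lt_of_le hu (by simpa using mul_le_mul_right hv u)
  have key : gmu⁻¹ * glam =
      (gb * ga * gb * ga ^ 2 * gb * ga * gb * ga ^ 2 * gb) *
      (ga ^ 2 * gx ^ 2 * ga * gb * ga ^ 2 * gb * ga * gb * ga ^ 2 * gb)⁻¹ *
      (gb * ga * gb * ga ^ 2 * gb * ga * gb * ga ^ 2 * gb)⁻¹ *
      (gb * ga * gy ^ 2 * gx⁻¹) := by
    simp only [gmu, glam, gx, gy, pow_two]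
    group
  have hrel : ga ^ 2 * gx ^ 2 * ga * gb * ga ^ 2 * gb * ga * gb * ga ^ 2 * gb = 1 := by
    have := rel_eq_one
    simp only [gx, pow_two]
    group
    group at this
    exact this
  -- x < 1
  have hx : gx < 1 := by
    by_contra h
    push_neg at h
    have h2 : (1 : G2503) < ga ^ 2 * gx ^ 2 * ga * gb * ga ^ 2 * gb * ga * gb * ga ^ 2 * gb := by
      have ha2 : (1 : G2503) < ga ^ 2 := by
        rw [pow_two]; exact hlt _ _ ha ha.le
      have hx2 : (1 : G2503) ≤ gx ^ 2 := by
        rw [pow_two]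
        calc (1 : G2503) ≤ gx := h
        _ = gx * 1 := (mul_one _).symm
        _ ≤ gx * gx := mul_le_mul_right h gx
      exact hlt _ _ (hlt _ _ (hlt _ _ (hlt _ _ (hlt _ _ (hlt _ _ (hlt _ _ (hlt _ _
        (hlt _ _ ha2 hx2) ha.le) hb.le) ha2.le) hb.le) ha.le) hb.le) ha2.le) hb.le
    rw [hrel] at h2
    exact lt_irrefl _ h2
  have hxinv : (1 : G2503) < gx⁻¹ := by
    have := mul_lt_mul_right hx gx⁻¹
    simpa using this
  have hy : (1 : G2503) < gy := by
    rw [gy, pow_two]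
    exact hlt _ _ hb (hlt _ _ ha ha.le).le
  rw [key, hrel]
  simp only [inv_one, mul_one, one_mul, mul_inv_cancel, mul_inv_rev]
  have : (1:G2503) < gb * ga * gy ^ 2 * gx⁻¹ := by
    have hy2 : (1 : G2503) < gy ^ 2 := by rw [pow_two]; exact hlt _ _ hy hy.le
    exact hlt _ _ (hlt _ _ (hlt _ _ hb ha.le) hy2.le) hxinv.le
  calc (1:G2503) < gb * ga * gy ^ 2 * gx⁻¹ := this
  _ = (gb * ga * gb * ga ^ 2 * gb * ga * gb * ga ^ 2 * gb) * 1 *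
      (gb * ga * gb * ga ^ 2 * gb * ga * gb * ga ^ 2 * gb)⁻¹ * (gb * ga * gy ^ 2 * gx⁻¹) := by
    group
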